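/- Let x ∈ ℝ^n with ‖x‖_∞ ≤ C, let j ≠ p be indices, and let w be a real constant with |w| ≤ C. Setting the parameter vector v by v_j = −w − 2C, v_p = −2C, and v_i = 0 otherwise, the ℓ∞-dist neuron output ‖x − v‖_∞ − 2C + c equals max{x_j + w, x_p} + c. -/
import Mathlib


/-- Maximum map realized by an ℓ∞-dist neuron: for `‖x‖_∞ ≤ C`, `|w| ≤ C`,
`j ≠ p`, taking the parameter vector `v` with `v_j = −w − 2C`, `v_p = −2C` and
`v_i = 0` otherwise, `‖x − v‖_∞ − 2C + c = max{x_j + w, x_p} + c`. -/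
theorem linf_neuron_maximum_map (n : ℕ) (C : ℝ) (hC : 0 < C)
    (x : Fin n → ℝ) (hx : ‖x‖ ≤ C) (j p : Fin n) (hjp : j ≠ p)
    (w : ℝ) (hw : |w| ≤ C) (c : ℝ) :
    ‖x - (fun i => if i = j then -w - 2 * C else if i = p then -2 * C else 0)‖
        - 2 * C + c = max (x j + w) (x p) + c := by
  set v : Fin n → ℝ := fun i => if i = j then -w - 2 * C else if i = p then -2 * C else 0 with hv
  have hxi : ∀ i, |x i| ≤ C := fun i => by
    have := norm_le_pi_norm x i
    rw [Real.norm_eq_abs] at this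
    linarith
  have hwle := abs_le.1 hw
  have hyj : (x - v) j = x j + w + 2 * C := by
    simp [hv, Pi.sub_apply]; ring
  have hyp : (x - v) p = x p + 2 * C := by
    simp [hv, Pi.sub_apply, hjp.symm]
  have hxj := abs_le.1 (hxi j)
  have hxp := abs_le.1 (hxi p)
  set M : ℝ := max (x j + w) (x p) + 2 * C with hM
  have hMp : x p + 2 * C ≤ M := by
    have := le_max_right (x j + w) (x p); linarith
  have hMj : x j + w + 2 * C ≤ M := by
    have := le_max_left (x j + w) (x p); linarith
  have hM0 : 0 ≤ M := by
    have : C ≤ x p + 2 * C := by linarith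
    linarith
  have hub : ‖x - v‖ ≤ M := by
    apply pi_norm_le_iff_of_nonneg hM0 |>.2
    intro i
    rw [Real.norm_eq_abs]
    by_cases hij : i = j
    · subst hij; rw [hyj, abs_of_nonneg (by linarith)]; exact hMj
    · by_cases hip : i = p
      · subst hip; rw [hyp, abs_of_nonneg (by linarith)]; exact hMp
      · have : (x - v) i = x i := by simp [hv, Pi.sub_apply, hij, hip]
        rw [this]
        have : C ≤ x p + 2 * C := by linarith
        exact le_trans (hxi i) (le_trans this hMp)
  have hlb : M ≤ ‖x - v‖ := by
    have h1 : x j + w + 2 * C ≤ ‖x - v‖ := by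
      have := norm_le_pi_norm (x - v) j
      rw [Real.norm_eq_abs, hyj, abs_of_nonneg (by linarith)] at this
      exact this
    have h2 : x p + 2 * C ≤ ‖x - v‖ := by
      have := norm_le_pi_norm (x - v) p
      rw [Real.norm_eq_abs, hyp, abs_of_nonneg (by linarith)] at this
      exact this
    rw [hM]
    rcases max_cases (x j + w) (x p) with ⟨h, _⟩ | ⟨h, _⟩ <;> rw [h] <;> linarith
  have : ‖x - v‖ = M := le_antisymm hub hlb
  rw [this, hM]; ring
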